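/- Let n ≥ 0 and let A₀ be the (n+1)×(n+1) matrix (indexed from 0) with diagonal entries A₀_{kk} = −(β_k I + μ + ω_k), first-row off-diagonal entries A₀_{0,k} = ω_k for k ≥ 1, and all other entries zero, where μ > 0, I ≥ 0, ω_0 = 0, ω_k ≥ 0, and 0 < β_0 ≤ β_k for all k. Then A₀ is invertible, its inverse has entries (A₀⁻¹)_{kk} = 1/A₀_{kk}, (A₀⁻¹)_{0,k} = −ω_k/(A₀_{00}·A₀_{kk}) for k ≥ 1, and zeros elsewhere, and the operator norm satisfies ‖A₀⁻¹‖ ≤ sqrt(n+1)/(β_0 I + μ). -/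

import Mathlib

/-- The operator (spectral) norm of a real matrix, viewed as a linear map
between Euclidean spaces. -/
noncomputable def matOpNorm {m n : ℕ} (M : Matrix (Fin m) (Fin n) ℝ) : ℝ :=
  ‖LinearMap.toContinuousLinearMap (Matrix.toEuclideanLin M)‖

theorem stmt_19 (n : ℕ) (μ I : ℝ) (β ω : ℕ → ℝ)
    (hμ : 0 < μ) (hI : 0 ≤ I) (hω0 : ω 0 = 0) (hω : ∀ k, 0 ≤ ω k)
    (hβ0 : 0 < β 0) (hβ : ∀ k, β 0 ≤ β k)
    (A₀ : Matrix (Fin (n + 1)) (Fin (n + 1)) ℝ)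
    (hA₀ : ∀ k l : Fin (n + 1), A₀ k l =
      if k = l then -(β k * I + μ + ω k)
      else if (k : ℕ) = 0 ∧ 1 ≤ (l : ℕ) then ω l
      else 0) :
    IsUnit A₀.det ∧
      (∀ k l : Fin (n + 1), A₀⁻¹ k l =
        if k = l then 1 / A₀ k k
        else if (k : ℕ) = 0 ∧ 1 ≤ (l : ℕ) then -(ω l) / (A₀ 0 0 * A₀ l l)
        else 0) ∧
      matOpNorm A₀⁻¹ ≤ Real.sqrt (n + 1) / (β 0 * I + μ) := by
  set a : ℝ := β 0 * I + μ with ha_def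
  have ha : 0 < a := add_pos_of_nonneg_of_pos (mul_nonneg hβ0.le hI) hμ
  have hd : ∀ k : Fin (n + 1), A₀ k k = -(β k * I + μ + ω k) := by
    intro k; rw [hA₀]; simp
  have hcol : ∀ k : Fin (n + 1), a + ω (k : ℕ) ≤ β (k : ℕ) * I + μ + ω (k : ℕ) := by
    intro k
    have := mul_le_mul_of_nonneg_right (hβ (k : ℕ)) hI
    simp only [ha_def]; linarith
  have hkpos : ∀ k : Fin (n + 1), 0 < β (k : ℕ) * I + μ + ω (k : ℕ) := by
    intro k
    have := hω (k : ℕ)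
    have := hcol k
    linarith
  have hne : ∀ k : Fin (n + 1), A₀ k k ≠ 0 := by
    intro k; rw [hd k]; exact neg_ne_zero.mpr (ne_of_gt (hkpos k))
  have hA00 : A₀ 0 0 = -a := by
    rw [hd 0]; simp [hω0, ha_def]
  set B : Matrix (Fin (n + 1)) (Fin (n + 1)) ℝ :=
    fun k l => if k = l then 1 / A₀ k k
      else if (k : ℕ) = 0 ∧ 1 ≤ (l : ℕ) then -(ω l) / (A₀ 0 0 * A₀ l l)
      else 0 with hB
  -- key: A₀ * B = 1
  have hmul : A₀ * B = 1 := by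
    ext k l
    rw [Matrix.mul_apply, Matrix.one_apply]
    by_cases hk : (k : ℕ) = 0
    · have hk0 : k = 0 := Fin.ext hk
      subst hk0
      by_cases hl : l = 0
      · subst hl
        rw [Finset.sum_eq_single 0]
        · simp [hB, mul_inv_cancel₀ (hne 0)]
        · intro j _ hj
          have : ¬ (j = (0 : Fin (n + 1))) := hj
          simp only [hB, if_neg this]
          have : ¬ ((j : ℕ) = 0) := fun h => this (Fin.ext h)
          simp [this]
        · simp
      · have hlne : (0 : Fin (n + 1)) ≠ l := fun h => hl h.symm
        have hl1 : 1 ≤ (l : ℕ) := by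
          have : (l : ℕ) ≠ 0 := fun h => hl (Fin.ext h)
          omega
        have hzero : ∀ j ∈ (Finset.univ : Finset (Fin (n + 1))),
            j ∉ ({0, l} : Finset (Fin (n + 1))) → A₀ 0 j * B j l = 0 := by
          intro j _ hj
          simp only [Finset.mem_insert, Finset.mem_singleton, not_or] at hj
          have hj0 : ¬ (j = (0 : Fin (n + 1))) := hj.1
          have hjl : ¬ (j = l) := hj.2
          have hjn : ¬ ((j : ℕ) = 0) := fun h => hj0 (Fin.ext h)
          simp [hB, hjl, hjn, hj0]
        rw [← Finset.sum_subset (Finset.subset_univ {0, l}) hzero,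
          Finset.sum_pair hlne]
        have hB0l : B 0 l = -(ω l) / (A₀ 0 0 * A₀ l l) := by
          simp [hB, hlne, hl1]
        have hBll : B l l = 1 / A₀ l l := by simp [hB]
        have hA0l : A₀ 0 l = ω l := by
          rw [hA₀]; simp [hlne, hl1]
        rw [hB0l, hBll, hA0l, if_neg hlne, ← mul_div_assoc,
          mul_div_mul_left _ _ (hne 0), mul_one_div, neg_div, neg_add_cancel]
    · rw [Finset.sum_eq_single k]
      · by_cases hl : k = l
        · subst hl
          simp [hB, mul_inv_cancel₀ (hne k)]
        · have hk0 : k ≠ 0 := fun h => hk (by simp [h])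
          simp [hB, hl, hk, hk0]
      · intro j _ hj
        have : ¬ (k = j) := fun h => hj h.symm
        rw [hA₀]
        simp [this, hk]
      · simp
  have hdet : IsUnit A₀.det := Matrix.isUnit_det_of_right_inverse hmul
  have hinv : A₀⁻¹ = B := Matrix.inv_eq_right_inv hmul
  refine ⟨hdet, fun k l => by rw [hinv], ?_⟩
  -- norm bound
  rw [matOpNorm, hinv]
  have hCnn : 0 ≤ Real.sqrt (↑n + 1) / a := by positivity
  apply ContinuousLinearMap.opNorm_le_bound _ hCnn
  intro x
  rw [EuclideanSpace.norm_eq, EuclideanSpace.norm_eq]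
  -- column sum bound
  have hcolsq : ∀ l : Fin (n + 1), ∑ k : Fin (n + 1), (B k l) ^ 2 ≤ 1 / a ^ 2 := by
    intro l
    by_cases hl : l = 0
    · subst hl
      rw [Finset.sum_eq_single 0]
      · simp only [hB, if_pos rfl, hA00]
        rw [div_pow, one_pow, neg_sq]
      · intro j _ hj
        have hjn : ¬ ((j : ℕ) = 0) := fun h => hj (Fin.ext h)
        simp [hB, hj, hjn]
      · simp
    · have hlne : (0 : Fin (n + 1)) ≠ l := fun h => hl h.symm
      have hl1 : 1 ≤ (l : ℕ) := by
        have : (l : ℕ) ≠ 0 := fun h => hl (Fin.ext h)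
        omega
      have hzero : ∀ j ∈ (Finset.univ : Finset (Fin (n + 1))),
          j ∉ ({0, l} : Finset (Fin (n + 1))) → (B j l) ^ 2 = 0 := by
        intro j _ hj
        simp only [Finset.mem_insert, Finset.mem_singleton, not_or] at hj
        have hjn : ¬ ((j : ℕ) = 0) := fun h => hj.1 (Fin.ext h)
        simp [hB, hj.1, hj.2, hjn]
      rw [← Finset.sum_subset (Finset.subset_univ {0, l}) hzero,
        Finset.sum_pair hlne]
      have hB0l : B 0 l = -(ω l) / (A₀ 0 0 * A₀ l l) := by
        simp [hB, hlne, hl1]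
      have hBll : B l l = 1 / A₀ l l := by simp [hB]
      rw [hB0l, hBll, hA00, hd l]
      set w := ω (l : ℕ) with hw
      set d := β (l : ℕ) * I + μ + w with hdd
      have hw0 : 0 ≤ w := hω _
      have hda : a + w ≤ d := hcol l
      have hd0 : 0 < d := hkpos l
      have h1 : (-w / (-a * -d)) ^ 2 = w ^ 2 / (a ^ 2 * d ^ 2) := by
        rw [neg_mul_neg, div_pow, mul_pow, neg_sq]
      have h2 : (1 / -d) ^ 2 = 1 / d ^ 2 := by rw [div_pow, one_pow, neg_sq]
      rw [h1, h2]
      have h3 : w ^ 2 + a ^ 2 ≤ d ^ 2 := by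
        nlinarith [mul_self_le_mul_self (by positivity : (0:ℝ) ≤ a + w) hda,
          mul_nonneg ha.le hw0]
      calc w ^ 2 / (a ^ 2 * d ^ 2) + 1 / d ^ 2
          = (w ^ 2 + a ^ 2) / (a ^ 2 * d ^ 2) := by
            field_simp
        _ ≤ d ^ 2 / (a ^ 2 * d ^ 2) := by gcongr
        _ = 1 / a ^ 2 := by
            rw [mul_comm, ← div_div, div_self (by positivity : (d:ℝ) ^ 2 ≠ 0)]
  -- Cauchy-Schwarz per row
  set v : Fin (n + 1) → ℝ := fun i => x i with hv
  have happ : ∀ k : Fin (n + 1), (Matrix.toEuclideanLin B x) k = ∑ l, B k l * v l := by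
    intro k; rfl
  have hS : 0 ≤ ∑ l, v l ^ 2 := Finset.sum_nonneg fun _ _ => sq_nonneg _
  have hrow : ∀ k : Fin (n + 1),
      ((Matrix.toEuclideanLin B x) k) ^ 2 ≤ (∑ l, (B k l) ^ 2) * ∑ l, v l ^ 2 := by
    intro k
    rw [happ k]
    exact Finset.sum_mul_sq_le_sq_mul_sq _ _ _
  have htot : ∑ k, ((Matrix.toEuclideanLin B x) k) ^ 2 ≤ ((↑n + 1) / a ^ 2) * ∑ l, v l ^ 2 := by
    calc ∑ k, ((Matrix.toEuclideanLin B x) k) ^ 2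
        ≤ ∑ k, (∑ l, (B k l) ^ 2) * ∑ l, v l ^ 2 :=
          Finset.sum_le_sum fun k _ => hrow k
      _ = (∑ k, ∑ l, (B k l) ^ 2) * ∑ l, v l ^ 2 := by rw [Finset.sum_mul]
      _ ≤ ((↑n + 1) / a ^ 2) * ∑ l, v l ^ 2 := by
          apply mul_le_mul_of_nonneg_right _ hS
          rw [Finset.sum_comm]
          calc ∑ l, ∑ k, (B k l) ^ 2 ≤ ∑ l : Fin (n + 1), 1 / a ^ 2 :=
                Finset.sum_le_sum fun l _ => hcolsq l
            _ = (↑n + 1) / a ^ 2 := by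
                rw [Finset.sum_const, Finset.card_univ, Fintype.card_fin]
                push_cast; ring
  calc Real.sqrt (∑ k, ‖(Matrix.toEuclideanLin B x) k‖ ^ 2)
      = Real.sqrt (∑ k, ((Matrix.toEuclideanLin B x) k) ^ 2) := by
        congr 1; apply Finset.sum_congr rfl; intro k _
        rw [Real.norm_eq_abs, sq_abs]
    _ ≤ Real.sqrt (((↑n + 1) / a ^ 2) * ∑ l, v l ^ 2) := Real.sqrt_le_sqrt htot
    _ = Real.sqrt (↑n + 1) / a * Real.sqrt (∑ l, v l ^ 2) := by
        rw [Real.sqrt_mul (by positivity), Real.sqrt_div (by positivity),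
          Real.sqrt_sq ha.le]
    _ = Real.sqrt (↑n + 1) / a * Real.sqrt (∑ i, ‖x i‖ ^ 2) := by
        congr 2; apply Finset.sum_congr rfl; intro i _
        rw [Real.norm_eq_abs, sq_abs]
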